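/- arXiv:1905.01485 — 2 statements merged into one kernel-verified Lean document; each statement's English description precedes it below -/
import Mathlib

section
/- Let (X, 𝔪) be a measurable space with all finite subsets in 𝔪 and X infinite, and X* the space of non-principal 𝔪-ultrafilters with the subspace topology from 𝔪^β. Then every countable union of nowhere dense subsets of X* is nowhere dense in X*. -/
open Set

def IsMFilter {X : Type*} [MeasurableSpace X] (p : Set (Set X)) : Prop :=
  (∀ A ∈ p, MeasurableSet A) ∧ ∅ ∉ p ∧ Set.univ ∈ p ∧
  (∀ A ∈ p, ∀ B : Set X, MeasurableSet B → A ⊆ B → B ∈ p) ∧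
  (∀ A ∈ p, ∀ B ∈ p, A ∩ B ∈ p)

def IsMUltrafilter {X : Type*} [MeasurableSpace X] (p : Set (Set X)) : Prop :=
  IsMFilter p ∧ ∀ q : Set (Set X), IsMFilter q → p ⊆ q → q = p

def MUltra (X : Type*) [MeasurableSpace X] : Type _ :=
  {p : Set (Set X) // IsMUltrafilter p}

def hatSet {X : Type*} [MeasurableSpace X] (A : Set X) : Set (MUltra X) :=
  {p | A ∈ p.1}

instance {X : Type*} [MeasurableSpace X] : TopologicalSpace (MUltra X) :=
  TopologicalSpace.generateFrom {U | ∃ A : Set X, MeasurableSet A ∧ U = hatSet A}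

instance {X : Type*} [MeasurableSpace X] : MeasurableSpace (MUltra X) :=
  MeasurableSpace.generateFrom {U | ∃ A : Set X, MeasurableSet A ∧ U = hatSet A}

def principalUF {X : Type*} [MeasurableSpace X] (x : X) : Set (Set X) :=
  {A | MeasurableSet A ∧ x ∈ A}

theorem principalUF_ultra {X : Type*} [MeasurableSpace X] (x : X) :
    IsMUltrafilter (principalUF x) := by
  constructor
  · refine ⟨fun A hA => hA.1, ?_, ⟨MeasurableSet.univ, trivial⟩, ?_, ?_⟩
    · intro h; exact h.2
    · intro A hA B hB hAB; exact ⟨hB, hAB hA.2⟩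
    · intro A hA B hB; exact ⟨hA.1.inter hB.1, hA.2, hB.2⟩
  · intro q hq hpq
    refine Set.Subset.antisymm ?_ hpq
    intro A hAq
    have hAm : MeasurableSet A := hq.1 A hAq
    by_contra hx
    have hxc : x ∈ Aᶜ := fun h => hx ⟨hAm, h⟩
    have hcq : Aᶜ ∈ q := hpq ⟨hAm.compl, hxc⟩
    have hint : A ∩ Aᶜ ∈ q := hq.2.2.2.2 A hAq Aᶜ hcq
    rw [Set.inter_compl_self] at hint
    exact hq.2.1 hint

def princ {X : Type*} [MeasurableSpace X] (x : X) : MUltra X :=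
  ⟨principalUF x, principalUF_ultra x⟩

section Aux
variable {X : Type*} [MeasurableSpace X]

/-- Ultrafilter dichotomy. -/
lemma ultra_mem_or {p : Set (Set X)} (hp : IsMUltrafilter p) {A : Set X}
    (hA : MeasurableSet A) : A ∈ p ∨ Aᶜ ∈ p := by
  obtain ⟨⟨hmeas, hemp, huniv, hup, hint⟩, hmax⟩ := hp
  by_cases hmeet : ∀ C ∈ p, (A ∩ C).Nonempty
  · left
    set q : Set (Set X) := {B | MeasurableSet B ∧ ∃ C ∈ p, A ∩ C ⊆ B} with hq
    have hqf : IsMFilter q := by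
      refine ⟨fun B hB => hB.1, ?_, ⟨MeasurableSet.univ, univ, huniv, subset_univ _⟩, ?_, ?_⟩
      · rintro ⟨-, C, hC, hsub⟩
        exact (hmeet C hC).ne_empty (subset_empty_iff.mp hsub)
      · rintro B ⟨hBm, C, hC, hsub⟩ D hDm hBD
        exact ⟨hDm, C, hC, hsub.trans hBD⟩
      · rintro B ⟨hBm, C, hC, hsub⟩ B' ⟨hB'm, C', hC', hsub'⟩
        refine ⟨hBm.inter hB'm, C ∩ C', hint C hC C' hC', ?_⟩
        exact fun x hx => ⟨hsub ⟨hx.1, hx.2.1⟩, hsub' ⟨hx.1, hx.2.2⟩⟩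
    have hpq : p ⊆ q := fun C hC => ⟨hmeas C hC, C, hC, inter_subset_right⟩
    have := hmax q hqf hpq
    rw [← this]
    exact ⟨hA, univ, huniv, by simp⟩
  · right
    push_neg at hmeet
    obtain ⟨C, hC, hACempty⟩ := hmeet
    exact hup C hC Aᶜ hA.compl fun x hx hxA => (hACempty ▸ (⟨hxA, hx⟩ : x ∈ A ∩ C) : x ∈ (∅ : Set X))

/-- Every m-filter extends to an m-ultrafilter. -/
lemma exists_ultra_extend {q : Set (Set X)} (hq : IsMFilter q) :
    ∃ p, IsMUltrafilter p ∧ q ⊆ p := by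
  have H : ∀ c ⊆ {r : Set (Set X) | IsMFilter r}, IsChain (· ⊆ ·) c → c.Nonempty →
      ∃ ub ∈ {r : Set (Set X) | IsMFilter r}, ∀ s ∈ c, s ⊆ ub := by
    intro c hcS hchain hcne
    refine ⟨⋃₀ c, ?_, fun s hs => subset_sUnion_of_mem hs⟩
    obtain ⟨s₀, hs₀⟩ := hcne
    refine ⟨?_, ?_, ⟨s₀, hs₀, (hcS hs₀).2.2.1⟩, ?_, ?_⟩
    · rintro A ⟨s, hs, hAs⟩; exact (hcS hs).1 A hAs
    · rintro ⟨s, hs, hes⟩; exact (hcS hs).2.1 hes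
    · rintro A ⟨s, hs, hAs⟩ B hBm hAB
      exact ⟨s, hs, (hcS hs).2.2.2.1 A hAs B hBm hAB⟩
    · rintro A ⟨s, hs, hAs⟩ B ⟨t, ht, hBt⟩
      rcases hchain.total hs ht with hst | hts
      · exact ⟨t, ht, (hcS ht).2.2.2.2 A (hst hAs) B hBt⟩
      · exact ⟨s, hs, (hcS hs).2.2.2.2 A hAs B (hts hBt)⟩
  obtain ⟨m, hqm, hmS, hmax⟩ := zorn_subset_nonempty {r : Set (Set X) | IsMFilter r} H q hq
  exact ⟨m, ⟨hmS, fun r hr hmr => (hmax hr hmr).antisymm hmr⟩, hqm⟩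

variable (hfin : ∀ F : Set X, F.Finite → MeasurableSet F)
include hfin

/-- an ultrafilter containing a finite set is principal -/
lemma principal_of_finite_mem {p : Set (Set X)} (hp : IsMUltrafilter p)
    {F : Set X} (hF : F.Finite) (hFp : F ∈ p) : ∃ x : X, p = principalUF x := by
  revert hFp
  refine Set.Finite.induction_on (motive := fun s _ => s ∈ p → ∃ x : X, p = principalUF x) F hF
    (fun h => absurd h hp.1.2.1) ?_
  rintro a s has hsfin IH hFp
  have hsm : MeasurableSet ({a} : Set X) := hfin _ (finite_singleton a)
  rcases ultra_mem_or hp hsm with ha | hac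
  · refine ⟨a, (hp.2 _ ?_ ?_).symm⟩
    · exact (principalUF_ultra a).1
    · intro A hA
      refine ⟨hp.1.1 A hA, ?_⟩
      by_contra hxa
      have h0 : A ∩ {a} ∈ p := hp.1.2.2.2.2 A hA {a} ha
      have he : A ∩ {a} = ∅ := by
        ext y; simp only [mem_inter_iff, mem_singleton_iff, mem_empty_iff_false, iff_false]
        rintro ⟨hyA, rfl⟩; exact hxa hyA
      rw [he] at h0
      exact hp.1.2.1 h0
  · refine IH ?_
    have h1 : insert a s ∩ {a}ᶜ ∈ p := hp.1.2.2.2.2 _ hFp _ hac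
    refine hp.1.2.2.2.1 _ h1 s (hfin s hsfin) ?_
    rintro y ⟨hy1, hy2⟩
    rcases hy1 with rfl | hys
    · exact absurd rfl hy2
    · exact hys

/-- existence of a nonprincipal ultrafilter containing all measurable
cofinite-mod-B supersets, for B infinite measurable -/
lemma exists_nonprincipal {B : Set X} (hB : MeasurableSet B) (hBinf : B.Infinite) :
    ∃ p, IsMUltrafilter p ∧ (∀ C : Set X, MeasurableSet C → (B \ C).Finite → C ∈ p) ∧
      ∀ x : X, p ≠ principalUF x := by
  have hqf : IsMFilter {C : Set X | MeasurableSet C ∧ (B \ C).Finite} := by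
    refine ⟨fun C hC => hC.1, ?_, ⟨MeasurableSet.univ, by simp⟩, ?_, ?_⟩
    · rintro ⟨-, hfin'⟩; simp only [diff_empty] at hfin'; exact hBinf hfin'
    · rintro C ⟨hCm, hCf⟩ D hDm hCD
      exact ⟨hDm, hCf.subset (diff_subset_diff_right hCD)⟩
    · rintro C ⟨hCm, hCf⟩ D ⟨hDm, hDf⟩
      refine ⟨hCm.inter hDm, (hCf.union hDf).subset ?_⟩
      intro x hx
      by_cases hxC : x ∈ C
      · exact Or.inr ⟨hx.1, fun h => hx.2 ⟨hxC, h⟩⟩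
      · exact Or.inl ⟨hx.1, hxC⟩
  obtain ⟨p, hp, hqp⟩ := exists_ultra_extend hqf
  refine ⟨p, hp, fun C hCm hCf => hqp ⟨hCm, hCf⟩, ?_⟩
  rintro x rfl
  have h1 : ({x}ᶜ : Set X) ∈ principalUF x :=
    hqp ⟨(hfin _ (finite_singleton x)).compl, (finite_singleton x).subset (by simp)⟩
  exact h1.2 rfl

/-- nonprincipal ultrafilters are closed under cofinite-mod-a-member supersets -/
lemma mem_of_cofinite {p : Set (Set X)} (hp : IsMUltrafilter p)
    (hnp : ∀ x : X, p ≠ principalUF x) {B C : Set X} (hBp : B ∈ p)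
    (hCm : MeasurableSet C) (h : (B \ C).Finite) : C ∈ p := by
  have hdm : MeasurableSet (B \ C) := hfin _ h
  rcases ultra_mem_or hp hdm with hd | hdc
  · obtain ⟨x, rfl⟩ := principal_of_finite_mem hfin hp h hd
    exact absurd rfl (hnp x)
  · have h1 : B ∩ (B \ C)ᶜ ∈ p := hp.1.2.2.2.2 B hBp _ hdc
    refine hp.1.2.2.2.1 _ h1 C hCm ?_
    rintro y ⟨hyB, hyC⟩
    by_contra hyC'
    exact hyC ⟨hyB, hyC'⟩

/-- countable sets are measurable -/
lemma countable_measurable {s : Set X} (hs : s.Countable) : MeasurableSet s := by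
  rw [← biUnion_of_singleton s]
  exact MeasurableSet.biUnion hs fun x _ => hfin _ (finite_singleton x)

end Aux


section Top
variable {X : Type*} [MeasurableSpace X]

lemma exists_basic {U : Set (MUltra X)} (hU : IsOpen U) :
    ∀ p ∈ U, ∃ A : Set X, MeasurableSet A ∧ A ∈ p.1 ∧ hatSet A ⊆ U := by
  have hU' : TopologicalSpace.GenerateOpen
      {V | ∃ A : Set X, MeasurableSet A ∧ V = hatSet A} U := hU
  induction hU' with
  | @basic V hV =>
    obtain ⟨A, hAm, rfl⟩ := hV
    exact fun p hp => ⟨A, hAm, hp, subset_rfl⟩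
  | univ => exact fun p _ => ⟨univ, MeasurableSet.univ, p.2.1.2.2.1, subset_univ _⟩
  | @inter V W hVo hWo IHV IHW =>
    intro p hp
    obtain ⟨A, hAm, hAp, hAV⟩ := IHV hVo p hp.1
    obtain ⟨B, hBm, hBp, hBW⟩ := IHW hWo p hp.2
    refine ⟨A ∩ B, hAm.inter hBm, p.2.1.2.2.2.2 A hAp B hBp, ?_⟩
    intro q hq
    have hqA : A ∈ q.1 := q.2.1.2.2.2.1 _ hq A hAm inter_subset_left
    have hqB : B ∈ q.1 := q.2.1.2.2.2.1 _ hq B hBm inter_subset_right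
    exact ⟨hAV hqA, hBW hqB⟩
  | @sUnion S hS IH =>
    rintro p ⟨V, hVS, hpV⟩
    obtain ⟨A, h1, h2, h3⟩ := IH V hVS (hS V hVS) p hpV
    exact ⟨A, h1, h2, h3.trans (subset_sUnion_of_mem hVS)⟩

lemma exists_basicY {s : Set (MUltra X)} {U : Set ↥s} (hU : IsOpen U) {p : ↥s} (hp : p ∈ U) :
    ∃ A : Set X, MeasurableSet A ∧ A ∈ p.1.1 ∧ {q : ↥s | A ∈ q.1.1} ⊆ U := by
  obtain ⟨V, hV, rfl⟩ := isOpen_induced_iff.mp hU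
  obtain ⟨A, hAm, hAp, hAV⟩ := exists_basic hV p.1 hp
  exact ⟨A, hAm, hAp, fun q hq => hAV hq⟩

lemma isOpen_hatY {s : Set (MUltra X)} {A : Set X} (hA : MeasurableSet A) :
    IsOpen {q : ↥s | A ∈ q.1.1} := by
  have h : IsOpen (hatSet A : Set (MUltra X)) :=
    TopologicalSpace.GenerateOpen.basic _ ⟨A, hA, rfl⟩
  exact h.preimage continuous_subtype_val

lemma nonprincipal_of_mem {p : MUltra X} (hp : p ∈ (Set.range (princ : X → MUltra X))ᶜ) :
    ∀ x : X, p.1 ≠ principalUF x :=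
  fun x h => hp ⟨x, (Subtype.ext h.symm : princ x = p)⟩

lemma infinite_of_mem (hfin : ∀ F : Set X, F.Finite → MeasurableSet F) {p : Set (Set X)}
    (hp : IsMUltrafilter p) (hnp : ∀ x : X, p ≠ principalUF x) {A : Set X} (hA : A ∈ p) :
    A.Infinite := by
  intro hAfin
  obtain ⟨x, rfl⟩ := principal_of_finite_mem hfin hp hAfin hA
  exact hnp x rfl

end Top

theorem stmt16 {X : Type*} [MeasurableSpace X] [Infinite X]
    (hfin : ∀ F : Set X, F.Finite → MeasurableSet F)
    (f : ℕ → Set ↥((Set.range (princ : X → MUltra X))ᶜ))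
    (hf : ∀ n, interior (closure (f n)) = ∅) :
    interior (closure (⋃ n, f n)) = ∅ := by
  by_contra hne
  obtain ⟨p, hp⟩ := nonempty_iff_ne_empty.mpr hne
  obtain ⟨A0, hA0m, hA0p, hA0sub⟩ := exists_basicY isOpen_interior hp
  have hA0cl : {q : ↥((Set.range (princ : X → MUltra X))ᶜ) | A0 ∈ q.1.1} ⊆
      closure (⋃ n, f n) := hA0sub.trans interior_subset
  have hnp := nonprincipal_of_mem p.2
  have hA0inf : A0.Infinite := infinite_of_mem hfin p.1.2 hnp hA0p
  -- the inductive step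
  have hstep : ∀ (n : ℕ) (A : {A : Set X // MeasurableSet A ∧ A.Infinite}),
      ∃ B : {A : Set X // MeasurableSet A ∧ A.Infinite}, B.1 ⊆ A.1 ∧ (A.1 \ B.1).Infinite ∧
        {q : ↥((Set.range (princ : X → MUltra X))ᶜ) | B.1 ∈ q.1.1} ⊆ (closure (f n))ᶜ := by
    rintro n ⟨A, hAm, hAinf⟩
    obtain ⟨r, hr, hrmem, hrnp⟩ := exists_nonprincipal hfin hAm hAinf
    have hrA : A ∈ r := hrmem A hAm (by simp)
    have hrY : (⟨r, hr⟩ : MUltra X) ∈ (Set.range (princ : X → MUltra X))ᶜ := by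
      rintro ⟨x, hx⟩
      exact hrnp x (congrArg Subtype.val hx).symm
    have hopen : IsOpen {q : ↥((Set.range (princ : X → MUltra X))ᶜ) | A ∈ q.1.1} :=
      isOpen_hatY hAm
    have hnotsub : ¬ {q : ↥((Set.range (princ : X → MUltra X))ᶜ) | A ∈ q.1.1} ⊆
        closure (f n) := by
      intro hsub
      have h1 : (⟨⟨r, hr⟩, hrY⟩ : ↥((Set.range (princ : X → MUltra X))ᶜ)) ∈
          interior (closure (f n)) := interior_maximal hsub hopen hrA
      rw [hf n] at h1
      exact h1
    obtain ⟨q', hq'A, hq'cl⟩ : ∃ q' : ↥((Set.range (princ : X → MUltra X))ᶜ),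
        A ∈ q'.1.1 ∧ q' ∉ closure (f n) := by
      by_contra h
      push_neg at h
      exact hnotsub fun q hq => h q hq
    obtain ⟨C, hCm, hCq, hCsub⟩ :=
      exists_basicY isClosed_closure.isOpen_compl (hq'cl : q' ∈ (closure (f n))ᶜ)
    have hq'np := nonprincipal_of_mem q'.2
    have hACq : A ∩ C ∈ q'.1.1 := q'.1.2.1.2.2.2.2 A hq'A C hCq
    have hACinf : (A ∩ C).Infinite := infinite_of_mem hfin q'.1.2 hq'np hACq
    let e : ℕ ↪ ↥(A ∩ C) := hACinf.natEmbedding _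
    have hinj : Function.Injective (fun k : ℕ => (e (2 * k) : X)) := by
      intro a b h
      have h2 := e.injective (Subtype.val_injective h)
      omega
    set D : Set X := Set.range (fun k : ℕ => (e (2 * k) : X)) with hD
    have hDsub : D ⊆ A ∩ C := by
      rintro _ ⟨k, rfl⟩
      exact (e (2 * k)).2
    have hDm : MeasurableSet D := countable_measurable hfin (countable_range _)
    have hDinf : D.Infinite := infinite_range_of_injective hinj
    have hoddinj : Function.Injective (fun k : ℕ => (e (2 * k + 1) : X)) := by
      intro a b h
      have h2 := e.injective (Subtype.val_injective h)
      omega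
    have hodd : ∀ k : ℕ, (e (2 * k + 1) : X) ∈ A \ D := by
      intro k
      refine ⟨(e (2 * k + 1)).2.1, ?_⟩
      rintro ⟨m, hm⟩
      have h2 := e.injective (Subtype.val_injective hm)
      omega
    have hADinf : (A \ D).Infinite := infinite_of_injective_forall_mem hoddinj hodd
    refine ⟨⟨D, hDm, hDinf⟩, hDsub.trans inter_subset_left, hADinf, ?_⟩
    intro q hq
    exact hCsub (q.1.2.1.2.2.2.1 D hq C hCm (hDsub.trans inter_subset_right))
  -- build the decreasing sequence
  obtain ⟨g, hg0, hgs⟩ : ∃ g : ℕ → {A : Set X // MeasurableSet A ∧ A.Infinite},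
      g 0 = ⟨A0, hA0m, hA0inf⟩ ∧ ∀ n, (g (n + 1)).1 ⊆ (g n).1 ∧
        ((g n).1 \ (g (n + 1)).1).Infinite ∧
        {q : ↥((Set.range (princ : X → MUltra X))ᶜ) | (g (n + 1)).1 ∈ q.1.1} ⊆
          (closure (f n))ᶜ := by
    choose F h1 h2 h3 using hstep
    exact ⟨fun n => Nat.rec ⟨A0, hA0m, hA0inf⟩ F n, rfl, fun n => ⟨h1 n _, h2 n _, h3 n _⟩⟩
  have hmono : ∀ m n, m ≤ n → (g n).1 ⊆ (g m).1 := fun m n hmn =>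
    Nat.le_induction subset_rfl (fun n _ ih => ((hgs n).1).trans ih) n hmn
  have hsubA0 : ∀ n, (g n).1 ⊆ A0 := by
    intro n
    have h := hmono 0 n (Nat.zero_le n)
    rwa [hg0] at h
  -- choose distinct points
  have hpts : ∀ n, ∃ x, x ∈ (g n).1 \ (g (n + 1)).1 := fun n => (hgs n).2.1.nonempty
  choose y hy using hpts
  have hyg : ∀ n, y n ∈ (g n).1 := fun n => (hy n).1
  have hinj : Function.Injective y := by
    intro m n h
    by_contra hne'
    rcases Nat.lt_or_ge m n with hlt | hge
    · have h1 : y n ∈ (g (m + 1)).1 := hmono (m + 1) n hlt (hyg n)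
      rw [← h] at h1
      exact (hy m).2 h1
    · have hlt : n < m := lt_of_le_of_ne hge (Ne.symm hne')
      have h1 : y m ∈ (g (n + 1)).1 := hmono (n + 1) m hlt (hyg m)
      rw [h] at h1
      exact (hy n).2 h1
  set B : Set X := Set.range y with hB
  have hBm : MeasurableSet B := countable_measurable hfin (countable_range y)
  have hBinf : B.Infinite := infinite_range_of_injective hinj
  have hBsub : B ⊆ A0 := by
    rintro _ ⟨n, rfl⟩
    exact hsubA0 n (hyg n)
  have hBdiff : ∀ n, (B \ (g n).1).Finite := by
    intro n
    refine ((Set.finite_Iio n).image y).subset ?_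
    rintro _ ⟨⟨k, rfl⟩, hnot⟩
    refine ⟨k, ?_, rfl⟩
    by_contra hk
    simp only [mem_Iio, not_lt] at hk
    exact hnot (hmono n k hk (hyg k))
  -- the final ultrafilter
  obtain ⟨r, hr, hrmem, hrnp⟩ := exists_nonprincipal hfin hBm hBinf
  have hrY : (⟨r, hr⟩ : MUltra X) ∈ (Set.range (princ : X → MUltra X))ᶜ := by
    rintro ⟨x, hx⟩
    exact hrnp x (congrArg Subtype.val hx).symm
  set z : ↥((Set.range (princ : X → MUltra X))ᶜ) := ⟨⟨r, hr⟩, hrY⟩ with hz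
  have hzB : B ∈ r := hrmem B hBm (by simp)
  have hzA0 : A0 ∈ r := hrmem A0 hA0m (by rw [diff_eq_empty.mpr hBsub]; exact finite_empty)
  have hzcl : z ∈ closure (⋃ n, f n) := hA0cl hzA0
  have hdisj : ∀ q : ↥((Set.range (princ : X → MUltra X))ᶜ), B ∈ q.1.1 → ∀ n, q ∉ f n := by
    intro q hqB n hqf
    have hq_np := nonprincipal_of_mem q.2
    have hqg : (g (n + 1)).1 ∈ q.1.1 :=
      mem_of_cofinite hfin q.1.2 hq_np hqB (g (n + 1)).2.1 (hBdiff (n + 1))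
    exact ((hgs n).2.2 hqg) (subset_closure hqf)
  have hopenB : IsOpen {q : ↥((Set.range (princ : X → MUltra X))ᶜ) | B ∈ q.1.1} :=
    isOpen_hatY hBm
  obtain ⟨w, hw1, hw2⟩ := mem_closure_iff.mp hzcl _ hopenB hzB
  obtain ⟨n, hwn⟩ := mem_iUnion.mp hw2
  exact hdisj w hw1 n hwn
end

section
/- Let (S, ·, 𝔪) be a measurable semigroup with S infinite and all finite subsets of S in 𝔪. Then S* = 𝔪^β \ e(S) (the non-principal 𝔪-ultrafilters) is a left ideal of (𝔪^β, ·) if and only if S is weakly left cancellative, i.e., for every x, y ∈ S the set {t ∈ S : x·t = y} is finite. -/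
open Set

section Aux
variable {X : Type*} [MeasurableSpace X]

theorem mem_or_compl_mem (r : MUltra X) (A : Set X) (hA : MeasurableSet A) :
    A ∈ r.1 ∨ Aᶜ ∈ r.1 := by
  obtain ⟨⟨hmeas, hempty, huniv, hup, hinter⟩, hmax⟩ := r.2
  by_cases h : ∃ C ∈ r.1, A ∩ C = ∅
  · obtain ⟨C, hC, hAC⟩ := h
    right
    exact hup C hC Aᶜ hA.compl (fun x hx hxA =>
      absurd (Set.mem_inter hxA hx) (by rw [hAC]; exact id))
  · push_neg at h
    left
    set q : Set (Set X) := {B | MeasurableSet B ∧ ∃ C ∈ r.1, A ∩ C ⊆ B} with hq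
    have hqf : IsMFilter q := by
      refine ⟨fun B hB => hB.1, ?_, ⟨MeasurableSet.univ, Set.univ, huniv, Set.subset_univ _⟩,
        ?_, ?_⟩
      · rintro ⟨-, C, hC, hsub⟩
        exact (h C hC).ne_empty (Set.subset_empty_iff.mp hsub)
      · rintro B ⟨hBm, C, hC, hsub⟩ D hDm hBD
        exact ⟨hDm, C, hC, hsub.trans hBD⟩
      · rintro B ⟨hBm, C, hC, hsub⟩ B' ⟨hBm', C', hC', hsub'⟩
        refine ⟨hBm.inter hBm', C ∩ C', hinter C hC C' hC', fun x hx => ?_⟩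
        exact ⟨hsub ⟨hx.1, hx.2.1⟩, hsub' ⟨hx.1, hx.2.2⟩⟩
    have hsub : r.1 ⊆ q := fun C hC => ⟨hmeas C hC, C, hC, Set.inter_subset_right⟩
    have : q = r.1 := hmax q hqf hsub
    rw [← this]
    exact ⟨hA, Set.univ, huniv, by simp⟩

theorem eq_princ_of_singleton (r : MUltra X) (y : X) (hy : {y} ∈ r.1) : r = princ y := by
  obtain ⟨⟨hmeas, hempty, huniv, hup, hinter⟩, hmax⟩ := r.2
  have hsub : r.1 ⊆ principalUF y := by
    intro A hA
    refine ⟨hmeas A hA, ?_⟩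
    by_contra hyA
    have : A ∩ {y} = ∅ := by
      ext x; simp only [Set.mem_inter_iff, Set.mem_singleton_iff, Set.mem_empty_iff_false,
        iff_false, not_and]
      rintro hx rfl; exact hyA hx
    have := hinter A hA {y} hy
    rw [‹A ∩ {y} = ∅›] at this
    exact hempty this
  have : principalUF y = r.1 := hmax _ (principalUF_ultra y).1 hsub
  exact Subtype.ext this.symm

theorem compl_singleton_mem (r : MUltra X) (hfin : ∀ F : Set X, F.Finite → MeasurableSet F)
    (hr : r ∉ Set.range (princ : X → MUltra X)) (s : X) : {s}ᶜ ∈ r.1 := by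
  rcases mem_or_compl_mem r {s} (hfin _ (Set.finite_singleton s)) with h | h
  · exact absurd ⟨s, (eq_princ_of_singleton r s h).symm⟩ hr
  · exact h

theorem not_finite_mem (r : MUltra X) (hfin : ∀ F : Set X, F.Finite → MeasurableSet F)
    (hr : r ∉ Set.range (princ : X → MUltra X)) (F : Set X) (hF : F.Finite) : F ∉ r.1 := by
  obtain ⟨⟨hmeas, hempty, huniv, hup, hinter⟩, hmax⟩ := r.2
  refine Set.Finite.induction_on (motive := fun F _ => F ∉ r.1) F hF hempty ?_
  intro a F' haF' hF' ih hmem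
  have h1 : insert a F' ∩ {a}ᶜ ∈ r.1 :=
    hinter _ hmem _ (compl_singleton_mem r hfin hr a)
  have h2 : F' ∈ r.1 := by
    refine hup _ h1 F' (hfin F' hF') ?_
    rintro x ⟨hx, hxa⟩
    rcases hx with rfl | hx
    · exact absurd rfl hxa
    · exact hx
  exact ih h2

theorem exists_nonprincipal_mem (hfin : ∀ F : Set X, F.Finite → MeasurableSet F)
    (T : Set X) (hTm : MeasurableSet T) (hTi : T.Infinite) :
    ∃ q : MUltra X, T ∈ q.1 ∧ q ∉ Set.range (princ : X → MUltra X) := by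
  set F₀ : Set (Set X) := {A | MeasurableSet A ∧ (T \ A).Finite} with hF₀
  have hF₀f : IsMFilter F₀ := by
    refine ⟨fun A hA => hA.1, ?_, ⟨MeasurableSet.univ, by simp⟩, ?_, ?_⟩
    · rintro ⟨-, hfin'⟩
      simp only [Set.diff_empty] at hfin'
      exact hTi hfin'
    · rintro A ⟨hAm, hAf⟩ B hBm hAB
      exact ⟨hBm, hAf.subset (Set.diff_subset_diff_right hAB)⟩
    · rintro A ⟨hAm, hAf⟩ B ⟨hBm, hBf⟩
      refine ⟨hAm.inter hBm, ?_⟩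
      have : T \ (A ∩ B) ⊆ (T \ A) ∪ (T \ B) := by
        rintro x ⟨hxT, hxAB⟩
        by_cases hxA : x ∈ A
        · exact Or.inr ⟨hxT, fun hxB => hxAB ⟨hxA, hxB⟩⟩
        · exact Or.inl ⟨hxT, hxA⟩
      exact (hAf.union hBf).subset this
  have hchainub : ∀ c ⊆ {q : Set (Set X) | IsMFilter q}, IsChain (· ⊆ ·) c → c.Nonempty →
      ∃ ub ∈ {q : Set (Set X) | IsMFilter q}, ∀ s ∈ c, s ⊆ ub := by
    rintro c hc hchain ⟨q₀, hq₀⟩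
    refine ⟨⋃₀ c, ⟨?_, ?_, ?_, ?_, ?_⟩, fun s hs => Set.subset_sUnion_of_mem hs⟩
    · rintro A ⟨q, hq, hAq⟩; exact (hc hq).1 A hAq
    · rintro ⟨q, hq, hAq⟩; exact (hc hq).2.1 hAq
    · exact ⟨q₀, hq₀, (hc hq₀).2.2.1⟩
    · rintro A ⟨q, hq, hAq⟩ B hBm hAB
      exact ⟨q, hq, (hc hq).2.2.2.1 A hAq B hBm hAB⟩
    · rintro A ⟨q, hq, hAq⟩ B ⟨q', hq', hBq'⟩
      rcases hchain.total hq hq' with h | h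
      · exact ⟨q', hq', (hc hq').2.2.2.2 A (h hAq) B hBq'⟩
      · exact ⟨q, hq, (hc hq).2.2.2.2 A hAq B (h hBq')⟩
  obtain ⟨M, hFM, hMmax⟩ := zorn_subset_nonempty {q | IsMFilter q} hchainub F₀ hF₀f
  have hMu : IsMUltrafilter M :=
    ⟨hMmax.1, fun q hq hMq => Set.Subset.antisymm (hMmax.2 hq hMq) hMq⟩
  refine ⟨⟨M, hMu⟩, hFM ⟨hTm, by simp⟩, ?_⟩
  rintro ⟨s, hs⟩
  have hM_eq : principalUF s = M := congrArg Subtype.val hs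
  have hsub2 : T \ (T \ {s}) ⊆ {s} := by
    intro x hx
    by_contra hxs
    exact hx.2 ⟨hx.1, hxs⟩
  have hTs : T \ {s} ∈ M := hFM ⟨hTm.diff (hfin _ (Set.finite_singleton s)),
    (Set.finite_singleton s).subset hsub2⟩
  rw [← hM_eq] at hTs
  exact hTs.2.2 rfl
end Aux

theorem stmt19 {S : Type*} [Semigroup S] [MeasurableSpace S] [Infinite S]
    (hmul : Measurable fun x : S × S => x.1 * x.2)
    (hfin : ∀ F : Set S, F.Finite → MeasurableSet F)
    (mul : MUltra S → MUltra S → MUltra S)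
    (hmuldef : ∀ p q : MUltra S, (mul p q).1 =
      {A : Set S | MeasurableSet A ∧ {s : S | {t : S | s * t ∈ A} ∈ q.1} ∈ p.1}) :
    (∀ q : MUltra S, q ∉ Set.range (princ : S → MUltra S) →
        ∀ p : MUltra S, mul p q ∉ Set.range (princ : S → MUltra S)) ↔
      ∀ x y : S, {t : S | x * t = y}.Finite := by
  constructor
  · -- left ideal → weakly left cancellative
    intro hideal x y
    by_contra hinf
    have hTm : MeasurableSet {t : S | x * t = y} := by
      have heq : {t : S | x * t = y} = (fun t => x * t) ⁻¹' {y} := rfl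
      rw [heq]
      exact (hmul.comp (measurable_const.prodMk measurable_id))
        (hfin _ (Set.finite_singleton y))
    obtain ⟨q, hTq, hqnp⟩ := exists_nonprincipal_mem hfin _ hTm hinf
    have hr := hideal q hqnp (princ x)
    set r := mul (princ x) q with hrdef
    have hyc : ({y}ᶜ : Set S) ∈ r.1 := compl_singleton_mem r hfin hr y
    rw [hmuldef] at hyc
    have hx : x ∈ {s : S | {t : S | s * t ∈ ({y}ᶜ : Set S)} ∈ q.1} := hyc.2.2
    have hq2 := q.2.1.2.2.2.2 _ hTq _ hx
    have : {t : S | x * t = y} ∩ {t : S | x * t ∈ ({y}ᶜ : Set S)} = ∅ := by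
      ext t
      simp only [Set.mem_inter_iff, Set.mem_setOf_eq, Set.mem_compl_iff,
        Set.mem_singleton_iff, Set.mem_empty_iff_false, iff_false, not_and]
      exact fun h h' => h' h
    rw [this] at hq2
    exact q.2.1.2.1 hq2
  · -- weakly left cancellative → left ideal
    intro hwlc q hqnp p hr
    obtain ⟨y, hy⟩ := hr
    have hsing : ({y} : Set S) ∈ (mul p q).1 := by
      rw [← hy]; exact ⟨hfin _ (Set.finite_singleton y), rfl⟩
    rw [hmuldef] at hsing
    have hB := hsing.2
    have hBne : {s : S | {t : S | s * t ∈ ({y} : Set S)} ∈ q.1}.Nonempty := by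
      rcases Set.eq_empty_or_nonempty {s : S | {t : S | s * t ∈ ({y} : Set S)} ∈ q.1} with h | h
      · rw [h] at hB; exact absurd hB p.2.1.2.1
      · exact h
    obtain ⟨x, hx⟩ := hBne
    exact not_finite_mem q hfin hqnp _ (hwlc x y) hx
end
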